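/- For each fixed k ∈ ℕ, the set of connected k-regular directed graphs (every vertex has in-degree plus out-degree equal to k) is generated by a bonding grammar. Specifically, with N = {I, O} of type 1, T = {b} of type 2, O ⊗ I = b, and start hypergraphs Z_j^{(k)} = &(I^j, O^{k-j}) for 0 ≤ j ≤ k (a single vertex with j hyperedges labelled I and k−j hyperedges labelled O attached), the grammar BG_reg^{(k)} generates exactly the connected directed graphs in which every vertex has total degree k. -/

import Mathlib

/-! ## Hypergraphs (over a label alphabet `Λ`), bonding, breaking bonds,
bonding grammars, following "Bonding Grammars" (Pshenitsyn). -/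

structure BHypergraph (Λ : Type) where
  V : Finset ℕ
  E : Finset ℕ
  att : ℕ → List ℕ
  lab : ℕ → Λ

namespace BHypergraph

variable {Λ : Type}

/-- Attachment vertices lie in `V` and attachment lengths agree with types. -/
def WellFormed (typ : Λ → ℕ) (H : BHypergraph Λ) : Prop :=
  (∀ e ∈ H.E, ∀ v ∈ H.att e, v ∈ H.V) ∧
  (∀ e ∈ H.E, (H.att e).length = typ (H.lab e))

def Adj (H : BHypergraph Λ) (u v : ℕ) : Prop :=
  ∃ e ∈ H.E, u ∈ H.att e ∧ v ∈ H.att e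

/-- There is a path between `u` and `v` in `H`. -/
def HasPath (H : BHypergraph Λ) (u v : ℕ) : Prop :=
  Relation.ReflTransGen H.Adj u v

def Connected (H : BHypergraph Λ) : Prop :=
  ∀ u ∈ H.V, ∀ v ∈ H.V, H.HasPath u v

/-- The degree of a vertex: the number of pairs `(e, i)` with
`att e ( i ) = v`, i.e. occurrences of `v` in attachment sequences. -/
def degree (H : BHypergraph Λ) (v : ℕ) : ℕ :=
  ∑ e ∈ H.E, (H.att e).count v

def degreeSet (H : BHypergraph Λ) : Set ℕ :=
  {d | ∃ v ∈ H.V, H.degree v = d}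

def Isomorphic (H G : BHypergraph Λ) : Prop :=
  ∃ f g : ℕ → ℕ,
    Set.BijOn f ↑H.V ↑G.V ∧ Set.BijOn g ↑H.E ↑G.E ∧
    ∀ e ∈ H.E, G.att (g e) = (H.att e).map f ∧ G.lab (g e) = H.lab e

end BHypergraph

/-- A single bonding step: two distinct hyperedges `e₁, e₂` whose labels can be
bonded are merged into a single new hyperedge `e'` with concatenated
attachment sequence and label `lab e₁ ⊗ lab e₂`. -/
def BondingStep {Λ : Type} (bond : Λ → Λ → Option Λ) (H H' : BHypergraph Λ) : Prop :=
  ∃ e₁ e₂ e' t,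
    e₁ ∈ H.E ∧ e₂ ∈ H.E ∧ e₁ ≠ e₂ ∧ e' ∉ H.E ∧
    bond (H.lab e₁) (H.lab e₂) = some t ∧
    H'.V = H.V ∧
    H'.E = (H.E \ {e₁, e₂}) ∪ {e'} ∧
    (∀ e ∈ H.E \ {e₁, e₂}, H'.att e = H.att e ∧ H'.lab e = H.lab e) ∧
    H'.att e' = H.att e₁ ++ H.att e₂ ∧
    H'.lab e' = t

/-- Breaking the bond `e'` (whose label is `A₁ ⊗ A₂`) of `H'`, introducing the
fresh hyperedges `e₁, e₂`, yields `H`. -/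
def BreakBondAt {Λ : Type} (typ : Λ → ℕ) (bond : Λ → Λ → Option Λ)
    (H' H : BHypergraph Λ) (e' e₁ e₂ : ℕ) : Prop :=
  ∃ A₁ A₂,
    e' ∈ H'.E ∧ e₁ ∉ H'.E ∧ e₂ ∉ H'.E ∧ e₁ ≠ e₂ ∧
    bond A₁ A₂ = some (H'.lab e') ∧
    H.V = H'.V ∧
    H.E = (H'.E \ {e'}) ∪ {e₁, e₂} ∧
    (∀ e ∈ H'.E \ {e'}, H.att e = H'.att e ∧ H.lab e = H'.lab e) ∧
    H.att e₁ = (H'.att e').take (typ A₁) ∧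
    H.att e₂ = (H'.att e').drop (typ A₁) ∧
    H.lab e₁ = A₁ ∧ H.lab e₂ = A₂

def BreakBond {Λ : Type} (typ : Λ → ℕ) (bond : Λ → Λ → Option Λ)
    (H' H : BHypergraph Λ) : Prop :=
  ∃ e' e₁ e₂, BreakBondAt typ bond H' H e' e₁ e₂

/-- `BreaksTo typ bond H l F`: starting from `H` and successively breaking the
bonds listed in `l` yields `F`. -/
def BreaksTo {Λ : Type} (typ : Λ → ℕ) (bond : Λ → Λ → Option Λ) :
    BHypergraph Λ → List ℕ → BHypergraph Λ → Prop
  | H, [], F => H = F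
  | H, e :: l, F => ∃ H₁ e₁ e₂, BreakBondAt typ bond H H₁ e e₁ e₂ ∧ BreaksTo typ bond H₁ l F

/-- `H` is a disjoint union of copies of hypergraphs from `Zs`
(this plays the role of `m · Z`). -/
def IsUnionOfCopies {Λ : Type} (Zs : Set (BHypergraph Λ)) (H : BHypergraph Λ) : Prop :=
  ∃ (n : ℕ) (cV cE : ℕ → ℕ),
    (∀ v ∈ H.V, cV v < n) ∧ (∀ e ∈ H.E, cE e < n) ∧
    (∀ e ∈ H.E, ∀ v ∈ H.att e, v ∈ H.V) ∧
    (∀ e ∈ H.E, ∀ v ∈ H.att e, cV v = cE e) ∧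
    ∀ i < n, ∃ Z0 ∈ Zs, BHypergraph.Isomorphic
      ⟨H.V.filter (fun v => cV v = i), H.E.filter (fun e => cE e = i), H.att, H.lab⟩ Z0

/-- `C` is a connected component of `H`. -/
def IsComponent {Λ : Type} (H C : BHypergraph Λ) : Prop :=
  C.V ⊆ H.V ∧ C.att = H.att ∧ C.lab = H.lab ∧ C.V.Nonempty ∧
  (∀ u ∈ C.V, ∀ v ∈ H.V, (H.HasPath u v ↔ v ∈ C.V)) ∧
  ∀ e, e ∈ C.E ↔ (e ∈ H.E ∧ ∃ v ∈ H.att e, v ∈ C.V)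

/-- Disjoint union of two hypergraphs (via an even/odd renaming). -/
def hsum {Λ : Type} (H K : BHypergraph Λ) : BHypergraph Λ :=
  ⟨H.V.image (fun v => 2 * v) ∪ K.V.image (fun v => 2 * v + 1),
   H.E.image (fun e => 2 * e) ∪ K.E.image (fun e => 2 * e + 1),
   fun e => if e % 2 = 0 then (H.att (e / 2)).map (fun v => 2 * v)
            else (K.att (e / 2)).map (fun v => 2 * v + 1),
   fun e => if e % 2 = 0 then H.lab (e / 2) else K.lab (e / 2)⟩

/-- A bonding grammar: typed labels, nonterminal and terminal alphabets, a
partial bond function, and a tuple `Z` of start hypergraphs. -/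
structure BondingGrammar (Λ : Type) where
  typ : Λ → ℕ
  N : Set Λ
  T : Set Λ
  bond : Λ → Λ → Option Λ
  k : ℕ
  Z : Fin k → BHypergraph Λ

namespace BondingGrammar

variable {Λ : Type}

/-- Side conditions from the definition of a bonding grammar: `N` and `T` are
disjoint, the start hypergraphs are connected and well-formed, and the bond
function is a partial injective function `N × N ⇀ T` adding the types. -/
def WellFormed (G : BondingGrammar Λ) : Prop :=
  Disjoint G.N G.T ∧
  (∀ i, (G.Z i).Connected ∧ (G.Z i).WellFormed G.typ) ∧
  (∀ A₁ A₂ t, G.bond A₁ A₂ = some t →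
    A₁ ∈ G.N ∧ A₂ ∈ G.N ∧ t ∈ G.T ∧ G.typ t = G.typ A₁ + G.typ A₂) ∧
  (∀ A₁ A₂ B₁ B₂ t, G.bond A₁ A₂ = some t → G.bond B₁ B₂ = some t →
    A₁ = B₁ ∧ A₂ = B₂)

def ZSet (G : BondingGrammar Λ) : Set (BHypergraph Λ) :=
  {Z0 | ∃ i, Z0 = G.Z i}

/-- `G` generates `H` if some `m · Z` derives `H` by bonding steps. -/
def Generates (G : BondingGrammar Λ) (H : BHypergraph Λ) : Prop :=
  ∃ H₀, IsUnionOfCopies G.ZSet H₀ ∧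
    Relation.ReflTransGen (BondingStep G.bond) H₀ H

/-- The language of `G`: generated hypergraphs all of whose labels are terminal. -/
def Lang (G : BondingGrammar Λ) : Set (BHypergraph Λ) :=
  {H | G.Generates H ∧ ∀ e ∈ H.E, H.lab e ∈ G.T}

end BondingGrammar

/-! Labels `I, O` (nonterminal, type 1) and `b` (terminal, type 2). -/

inductive Lab : Type
  | I | O | b
deriving DecidableEq

def typLab : Lab → ℕ
  | .I => 1 | .O => 1 | .b => 2

def bondLab : Lab → Lab → Option Lab
  | .O, .I => some .b
  | _, _ => none

/-- The hypergraph `&(I^j, O^(k-j))`: one vertex with `j` hyperedges labelled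
`I` and `k - j` hyperedges labelled `O` attached to it. -/
def Zreg (k j : ℕ) : BHypergraph Lab :=
  ⟨{0}, Finset.range k, fun _ => [0], fun e => if e < j then Lab.I else Lab.O⟩

/-- The bonding grammar `BG_reg^(k)` with start tuple `Z_0^(k), …, Z_k^(k)`. -/
def BGreg (k : ℕ) : BondingGrammar Lab :=
  { typ := typLab, N := {Lab.I, Lab.O}, T := {Lab.b}, bond := bondLab,
    k := k + 1, Z := fun j => Zreg k (j : ℕ) }

/-- The star graph with one center connected by a `b`-labelled edge to each of
`n` leaves. -/
def starGraph (n : ℕ) : BHypergraph Lab :=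
  ⟨Finset.range (n + 1), Finset.range n, fun e => [0, e + 1], fun _ => Lab.b⟩


namespace BGP
open Finset

/-! ### Basic setup: splitting each binary edge of `H` into two half-edges -/

def M (H : BHypergraph Lab) : ℕ := H.E.sup id + 1

lemma lt_M {H : BHypergraph Lab} {f : ℕ} (hf : f ∈ H.E) : f < M H :=
  Nat.lt_succ_of_le (Finset.le_sup (f := id) hf)

def oe (H : BHypergraph Lab) (f : ℕ) : ℕ := 2 * (f + M H)
def ie (H : BHypergraph Lab) (f : ℕ) : ℕ := 2 * (f + M H) + 1

lemma oe_div (H : BHypergraph Lab) (f : ℕ) : oe H f / 2 - M H = f := by unfold oe; omega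
lemma ie_div (H : BHypergraph Lab) (f : ℕ) : ie H f / 2 - M H = f := by unfold ie; omega

def att0 (H : BHypergraph Lab) (f : ℕ) : List ℕ :=
  if 2 * M H ≤ f ∧ f / 2 - M H ∈ H.E then
    (if f % 2 = 0 then (H.att (f / 2 - M H)).take 1 else (H.att (f / 2 - M H)).drop 1)
  else H.att f

def lab0 (H : BHypergraph Lab) (f : ℕ) : Lab :=
  if 2 * M H ≤ f ∧ f / 2 - M H ∈ H.E then (if f % 2 = 0 then Lab.O else Lab.I)
  else H.lab f

lemma att0_oe {H : BHypergraph Lab} {f : ℕ} (hf : f ∈ H.E) :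
    att0 H (oe H f) = (H.att f).take 1 := by
  have h1 : 2 * M H ≤ oe H f := by unfold oe; omega
  have h3 : oe H f % 2 = 0 := by unfold oe; omega
  rw [att0, oe_div, if_pos ⟨h1, hf⟩, if_pos h3]

lemma att0_ie {H : BHypergraph Lab} {f : ℕ} (hf : f ∈ H.E) :
    att0 H (ie H f) = (H.att f).drop 1 := by
  have h1 : 2 * M H ≤ ie H f := by unfold ie; omega
  have h3 : ¬ ie H f % 2 = 0 := by unfold ie; omega
  rw [att0, ie_div, if_pos ⟨h1, hf⟩, if_neg h3]

lemma lab0_oe {H : BHypergraph Lab} {f : ℕ} (hf : f ∈ H.E) : lab0 H (oe H f) = Lab.O := by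
  have h1 : 2 * M H ≤ oe H f := by unfold oe; omega
  have h3 : oe H f % 2 = 0 := by unfold oe; omega
  rw [lab0, oe_div, if_pos ⟨h1, hf⟩, if_pos h3]

lemma lab0_ie {H : BHypergraph Lab} {f : ℕ} (hf : f ∈ H.E) : lab0 H (ie H f) = Lab.I := by
  have h1 : 2 * M H ≤ ie H f := by unfold ie; omega
  have h3 : ¬ ie H f % 2 = 0 := by unfold ie; omega
  rw [lab0, ie_div, if_pos ⟨h1, hf⟩, if_neg h3]

lemma att0_low {H : BHypergraph Lab} {f : ℕ} (hf : f < 2 * M H) : att0 H f = H.att f := by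
  rw [att0, if_neg]; rintro ⟨h, _⟩; omega

lemma lab0_low {H : BHypergraph Lab} {f : ℕ} (hf : f < 2 * M H) : lab0 H f = H.lab f := by
  rw [lab0, if_neg]; rintro ⟨h, _⟩; omega

def Est (H : BHypergraph Lab) (S : Finset ℕ) : Finset ℕ :=
  S ∪ (H.E \ S).image (oe H) ∪ (H.E \ S).image (ie H)

def Hst (H : BHypergraph Lab) (S : Finset ℕ) : BHypergraph Lab :=
  ⟨H.V, Est H S, att0 H, lab0 H⟩

lemma mem_Est {H : BHypergraph Lab} {S : Finset ℕ} {x : ℕ} :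
    x ∈ Est H S ↔ x ∈ S ∨ (∃ f, f ∈ H.E ∧ f ∉ S ∧ oe H f = x) ∨
      (∃ f, f ∈ H.E ∧ f ∉ S ∧ ie H f = x) := by
  simp only [Est, Finset.mem_union, Finset.mem_image, Finset.mem_sdiff]
  aesop

lemma Est_insert {H : BHypergraph Lab} {S : Finset ℕ} {e : ℕ} (hS : S ⊆ H.E)
    (he : e ∈ H.E) (heS : e ∉ S) :
    Est H (insert e S) = (Est H S \ {oe H e, ie H e}) ∪ {e} := by
  ext x
  simp only [Finset.mem_union, Finset.mem_sdiff, Finset.mem_insert, Finset.mem_singleton,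
    mem_Est]
  constructor
  · rintro ((rfl | hx) | ⟨f, hf, hfS, rfl⟩ | ⟨f, hf, hfS, rfl⟩)
    · exact Or.inr rfl
    · refine Or.inl ⟨Or.inl hx, ?_⟩
      have hxM := lt_M (hS hx)
      rintro (rfl | rfl) <;> simp only [oe, ie] at hxM <;> omega
    · have hfS' : ¬ (f = e ∨ f ∈ S) := hfS
      push_neg at hfS'
      refine Or.inl ⟨Or.inr (Or.inl ⟨f, hf, hfS'.2, rfl⟩), ?_⟩
      rintro (h | h)
      · exact hfS'.1 (by simp only [oe] at h; omega)
      · simp only [oe, ie] at h; omega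
    · have hfS' : ¬ (f = e ∨ f ∈ S) := hfS
      push_neg at hfS'
      refine Or.inl ⟨Or.inr (Or.inr ⟨f, hf, hfS'.2, rfl⟩), ?_⟩
      rintro (h | h)
      · simp only [oe, ie] at h; omega
      · exact hfS'.1 (by simp only [ie] at h; omega)
  · rintro (⟨(hx | ⟨f, hf, hfS, rfl⟩ | ⟨f, hf, hfS, rfl⟩), hne⟩ | rfl)
    · exact Or.inl (Or.inr hx)
    · refine Or.inr (Or.inl ⟨f, hf, ?_, rfl⟩)
      rintro (rfl | hfS')
      · exact hne (Or.inl rfl)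
      · exact hfS hfS'
    · refine Or.inr (Or.inr ⟨f, hf, ?_, rfl⟩)
      rintro (rfl | hfS')
      · exact hne (Or.inr rfl)
      · exact hfS hfS'
    · exact Or.inl (Or.inl rfl)

end BGP
namespace BGP

/-! ### One bonding step: merging the two half-edges of `e` -/

lemma step_to {H : BHypergraph Lab} {S : Finset ℕ} {e : ℕ} (hS : S ⊆ H.E)
    (he : e ∈ H.E) (heS : e ∉ S) (hlabb : H.lab e = Lab.b)
    {H' : BHypergraph Lab} (hV : H'.V = H.V) (hE : H'.E = Est H (insert e S))
    (hagree : ∀ f ∈ Est H (insert e S), H'.att f = att0 H f ∧ H'.lab f = lab0 H f) :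
    BondingStep bondLab (Hst H S) H' := by
  have heM : e < M H := lt_M he
  have heM2 : e < 2 * M H := by omega
  have heE : e ∈ Est H (insert e S) :=
    mem_Est.2 (Or.inl (Finset.mem_insert_self e S))
  refine ⟨oe H e, ie H e, e, Lab.b, ?_, ?_, ?_, ?_, ?_, hV, ?_, ?_, ?_, ?_⟩
  · exact mem_Est.2 (Or.inr (Or.inl ⟨e, he, heS, rfl⟩))
  · exact mem_Est.2 (Or.inr (Or.inr ⟨e, he, heS, rfl⟩))
  · simp only [oe, ie]; omega
  · intro hc
    rcases mem_Est.1 hc with hc | ⟨f, hf, hfS, hfe⟩ | ⟨f, hf, hfS, hfe⟩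
    · exact heS hc
    · simp only [oe] at hfe; omega
    · simp only [ie] at hfe; omega
  · show bondLab (lab0 H (oe H e)) (lab0 H (ie H e)) = some Lab.b
    rw [lab0_oe he, lab0_ie he]; rfl
  · rw [hE, Est_insert hS he heS]; rfl
  · intro f hf
    have hf2 : f ∈ Est H (insert e S) := by
      rw [Est_insert hS he heS]; exact Finset.mem_union_left _ hf
    exact hagree f hf2
  · show H'.att e = att0 H (oe H e) ++ att0 H (ie H e)
    rw [(hagree e heE).1, att0_low heM2, att0_oe he, att0_ie he, List.take_append_drop]
  · show H'.lab e = Lab.b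
    rw [(hagree e heE).2, lab0_low heM2, hlabb]

lemma breaks {H : BHypergraph Lab} (hlab : ∀ e ∈ H.E, H.lab e = Lab.b) :
    ∀ T : Finset ℕ, T ⊆ H.E → T.Nonempty →
      Relation.ReflTransGen (BondingStep bondLab) (Hst H (H.E \ T)) H := by
  intro T
  induction T using Finset.strongInduction with
  | _ T ih =>
    rintro hT ⟨e, heT⟩
    have he : e ∈ H.E := hT heT
    have heS : e ∉ H.E \ T := by simp [heT]
    by_cases h1 : T = {e}
    · subst h1
      apply Relation.ReflTransGen.single
      have hins : insert e (H.E \ {e}) = H.E := by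
        rw [Finset.sdiff_singleton_eq_erase, Finset.insert_erase he]
      have hEst : Est H H.E = H.E := by simp [Est]
      refine step_to Finset.sdiff_subset he heS (hlab e he) rfl ?_ ?_
      · rw [hins, hEst]
      · intro f hf
        rw [hins, hEst] at hf
        have hf2 : f < 2 * M H := by have := lt_M hf; omega
        exact ⟨(att0_low hf2).symm, (lab0_low hf2).symm⟩
    · have hT' : (T.erase e).Nonempty :=
        (Finset.erase_nonempty heT).2 ((Finset.nontrivial_iff_ne_singleton heT).2 h1)
      have hsub : T.erase e ⊆ H.E := (Finset.erase_subset _ _).trans hT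
      have hset : H.E \ T.erase e = insert e (H.E \ T) := by
        ext x
        simp only [Finset.mem_sdiff, Finset.mem_erase, Finset.mem_insert, not_and]
        constructor
        · rintro ⟨hx, hxe⟩
          by_cases hxeq : x = e
          · exact Or.inl hxeq
          · exact Or.inr ⟨hx, fun hxT => hxe hxeq hxT⟩
        · rintro (rfl | ⟨hx, hxT⟩)
          · exact ⟨he, fun h _ => absurd rfl h⟩
          · exact ⟨hx, fun _ h => hxT h⟩
      have hrest := ih (T.erase e) (Finset.erase_ssubset heT) hsub hT'
      rw [hset] at hrest
      refine Relation.ReflTransGen.head ?_ hrest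
      exact step_to Finset.sdiff_subset he heS (hlab e he) rfl rfl (fun f _ => ⟨rfl, rfl⟩)

/-! ### Invariants preserved by bonding steps -/

lemma bondLab_some {a b t : Lab} (h : bondLab a b = some t) :
    a = Lab.O ∧ b = Lab.I ∧ t = Lab.b := by
  cases a <;> cases b <;> simp_all [bondLab]

lemma step_inv {H₀ H₁ : BHypergraph Lab} (h : BondingStep bondLab H₀ H₁) :
    H₁.V = H₀.V ∧ (∀ v, H₁.degree v = H₀.degree v) ∧
      (H₀.WellFormed typLab → H₁.WellFormed typLab) := by
  obtain ⟨e₁, e₂, e', t, he₁, he₂, hne, he', hb, hV, hE, hkeep, hatt', hlab'⟩ := h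
  obtain ⟨ha, hbI, rfl⟩ := bondLab_some hb
  have hsub : ({e₁, e₂} : Finset ℕ) ⊆ H₀.E := by
    intro x hx
    rcases Finset.mem_insert.1 hx with rfl | hx
    · exact he₁
    · rw [Finset.mem_singleton.1 hx]; exact he₂
  have hnew : e' ∉ H₀.E \ {e₁, e₂} := fun hx => he' (Finset.mem_sdiff.1 hx).1
  have hE' : H₁.E = insert e' (H₀.E \ {e₁, e₂}) := by
    rw [hE, Finset.union_comm, ← Finset.insert_eq]
  refine ⟨hV, fun v => ?_, ?_⟩
  · unfold BHypergraph.degree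
    rw [hE', Finset.sum_insert hnew, hatt', List.count_append]
    have h2 : ∑ e ∈ H₀.E \ {e₁, e₂}, (H₁.att e).count v
        = ∑ e ∈ H₀.E \ {e₁, e₂}, (H₀.att e).count v :=
      Finset.sum_congr rfl (fun e heq => by rw [(hkeep e heq).1])
    have h3 : ∑ e ∈ H₀.E \ {e₁, e₂}, (H₀.att e).count v
        + ((H₀.att e₁).count v + (H₀.att e₂).count v)
        = ∑ e ∈ H₀.E, (H₀.att e).count v := by
      simpa [Finset.sum_pair hne] using
        Finset.sum_sdiff (f := fun e => (H₀.att e).count v) hsub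
    omega
  · rintro ⟨hWa, hWl⟩
    constructor
    · intro e he v hv
      rw [hV]
      rw [hE'] at he
      rcases Finset.mem_insert.1 he with rfl | he
      · rw [hatt'] at hv
        rcases List.mem_append.1 hv with hv | hv
        · exact hWa e₁ he₁ v hv
        · exact hWa e₂ he₂ v hv
      · rw [(hkeep e he).1] at hv
        exact hWa e (Finset.mem_sdiff.1 he).1 v hv
    · intro e he
      rw [hE'] at he
      rcases Finset.mem_insert.1 he with rfl | he
      · rw [hatt', hlab', List.length_append, hWl e₁ he₁, hWl e₂ he₂, ha, hbI]
        rfl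
      · rw [(hkeep e he).1, (hkeep e he).2]
        exact hWl e (Finset.mem_sdiff.1 he).1
    
lemma rtg_inv {H₀ H₁ : BHypergraph Lab}
    (h : Relation.ReflTransGen (BondingStep bondLab) H₀ H₁) :
    H₁.V = H₀.V ∧ (∀ v, H₁.degree v = H₀.degree v) ∧
      (H₀.WellFormed typLab → H₁.WellFormed typLab) := by
  induction h with
  | refl => exact ⟨rfl, fun _ => rfl, id⟩
  | tail _ hbc ih =>
    obtain ⟨a, b, c⟩ := step_inv hbc
    exact ⟨a.trans ih.1, fun v => (b v).trans (ih.2.1 v), fun w => c (ih.2.2 w)⟩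

end BGP
namespace BGP

/-! ### Properties of disjoint unions of copies of the `Zreg` start graphs -/

lemma union_inv {k : ℕ} {H₀ : BHypergraph Lab}
    (h : IsUnionOfCopies (BGreg k).ZSet H₀) :
    H₀.WellFormed typLab ∧ ∀ v ∈ H₀.V, H₀.degree v = k := by
  obtain ⟨n, cV, cE, hcV, hcE, hattV, hcc, hcomp⟩ := h
  -- analysis of the component of index `i`
  have key : ∀ i < n,
      (∀ e ∈ H₀.E.filter (fun e => cE e = i),
        (H₀.att e).length = 1 ∧ (H₀.lab e = Lab.I ∨ H₀.lab e = Lab.O)) ∧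
      (∀ v ∈ H₀.V.filter (fun v => cV v = i),
        ∑ e ∈ H₀.E.filter (fun e => cE e = i), (H₀.att e).count v = k) := by
    intro i hi
    obtain ⟨Z0, ⟨jj, hZ0⟩, f, g, hf, hg, hfg⟩ := hcomp i hi
    subst hZ0
    simp only [show (BGreg k).Z jj = Zreg k (jj : ℕ) from rfl] at hf hg hfg
    -- `Z0 = Zreg k jj`
    have hZatt : ∀ x, (Zreg k (jj : ℕ)).att x = [0] := fun _ => rfl
    have hZlab : ∀ x, (Zreg k (jj : ℕ)).lab x
        = if x < (jj : ℕ) then Lab.I else Lab.O := fun _ => rfl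
    constructor
    · intro e he
      have h1 := (hfg e he).1
      have h2 := (hfg e he).2
      rw [hZatt] at h1
      rw [hZlab] at h2
      constructor
      · have := congrArg List.length h1
        simpa using this.symm
      · by_cases hlt : g e < (jj : ℕ)
        · left; rw [← h2, if_pos hlt]
        · right; rw [← h2, if_neg hlt]
    · intro v hv
      have hvmem : v ∈ (H₀.V.filter (fun v => cV v = i) : Finset ℕ) := hv
      have hfv : f v = 0 := by
        have := hf.1 (by exact_mod_cast hvmem)
        simpa [Zreg] using this
      have hcnt : ∀ e ∈ H₀.E.filter (fun e => cE e = i), (H₀.att e).count v = 1 := by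
        intro e he
        have heE := (Finset.mem_filter.1 he).1
        have hcEe := (Finset.mem_filter.1 he).2
        have hsubV : ∀ u ∈ H₀.att e, u ∈ H₀.V.filter (fun u => cV u = i) := fun u hu =>
          Finset.mem_filter.2 ⟨hattV e heE u hu, by rw [hcc e heE u hu, hcEe]⟩
        have hmap : (H₀.att e).map f = [0] := ((hfg e he).1).symm
        have hc1 : (H₀.att e).count v = ((H₀.att e).map f).count 0 := by
          rw [List.count, List.count, List.countP_map]
          apply List.countP_congr
          intro u hu
          simp only [Function.comp, beq_iff_eq]
          constructor
          · rintro rfl; simp [hfv]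
          · intro h0
            have : f u = f v := by rw [h0, hfv]
            exact hf.2.1 (by exact_mod_cast hsubV u hu) (by exact_mod_cast hvmem) this
        rw [hc1, hmap]
        rfl
      rw [Finset.sum_congr rfl hcnt, Finset.sum_const, smul_eq_mul, mul_one]
      -- the component has exactly `k` edges
      have hcard : (H₀.E.filter (fun e => cE e = i)).card = (Finset.range k).card := by
        apply Finset.card_bij (fun e _ => g e)
        · intro a ha
          have := hg.1 (by exact_mod_cast ha)
          simpa [Zreg] using this
        · intro a ha b hb hab
          exact hg.2.1 (by exact_mod_cast ha) (by exact_mod_cast hb) hab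
        · intro b hb
          have hb' : b ∈ ((Zreg k (jj : ℕ)).E : Set ℕ) := by
            simpa [Zreg] using hb
          obtain ⟨a, ha, rfl⟩ := hg.2.2 hb'
          exact ⟨a, by exact_mod_cast ha, rfl⟩
      rw [hcard, Finset.card_range]
  refine ⟨⟨hattV, ?_⟩, ?_⟩
  · intro e he
    have hi := hcE e he
    have he' : e ∈ H₀.E.filter (fun e' => cE e' = cE e) := Finset.mem_filter.2 ⟨he, rfl⟩
    obtain ⟨hlen, hlab⟩ := ((key (cE e) hi).1 e he')
    rcases hlab with hlab | hlab <;> rw [hlab, hlen] <;> rfl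
  · intro v hv
    have hi := hcV v hv
    have hv' : v ∈ H₀.V.filter (fun u => cV u = cV v) := Finset.mem_filter.2 ⟨hv, rfl⟩
    have hmain := (key (cV v) hi).2 v hv'
    unfold BHypergraph.degree
    rw [← Finset.sum_filter_add_sum_filter_not H₀.E (fun e => cE e = cV v)]
    have hzero : ∑ e ∈ H₀.E.filter (fun e => ¬ cE e = cV v), (H₀.att e).count v = 0 := by
      apply Finset.sum_eq_zero
      intro e he
      have heE := (Finset.mem_filter.1 he).1
      have hne := (Finset.mem_filter.1 he).2
      apply List.count_eq_zero.2
      intro hvin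
      exact hne (by rw [hcc e heE v hvin])
    rw [hzero, hmain]
    omega

end BGP
namespace BGP

lemma indexOf_nodup_get {l : List ℕ} (hn : l.Nodup) {y : ℕ} (hy : y < l.length) :
    l.idxOf (l.get ⟨y, hy⟩) = y := by
  have h1 : l.get ⟨y, hy⟩ ∈ l := List.get_mem _ _
  have h2 : l.idxOf (l.get ⟨y, hy⟩) < l.length := List.idxOf_lt_length_iff.2 h1
  have h3 := List.idxOf_get h2
  have h4 := (hn.get_inj_iff).1 h3
  exact congrArg Fin.val h4

/-! ### `Hst H ∅` is a disjoint union of copies of the start hypergraphs -/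

lemma copies {k : ℕ} {H : BHypergraph Lab} (hWF : H.WellFormed typLab)
    (hlab : ∀ e ∈ H.E, H.lab e = Lab.b)
    (hdeg : ∀ v ∈ H.V, H.degree v = k) :
    IsUnionOfCopies (BGreg k).ZSet (Hst H ∅) := by
  classical
  have hatt2 : ∀ f ∈ H.E, ∃ a b, H.att f = [a, b] := by
    intro f hf
    exact List.length_eq_two.1 (by rw [hWF.2 f hf, hlab f hf]; rfl)
  have hmemE : ∀ {x : ℕ}, x ∈ (Hst H ∅).E ↔ ∃ f, f ∈ H.E ∧ (oe H f = x ∨ ie H f = x) := by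
    intro x
    rw [show (Hst H ∅).E = Est H ∅ from rfl, mem_Est]
    simp only [Finset.notMem_empty, false_or, not_false_iff, true_and]
    aesop
  have hEdgeCase : ∀ {x : ℕ}, x ∈ (Hst H ∅).E →
      ∃ f a b, f ∈ H.E ∧ H.att f = [a, b] ∧ a ∈ H.V ∧ b ∈ H.V ∧
        ((x = oe H f ∧ att0 H x = [a] ∧ lab0 H x = Lab.O) ∨
         (x = ie H f ∧ att0 H x = [b] ∧ lab0 H x = Lab.I)) := by
    intro x hx
    obtain ⟨f, hf, hcase⟩ := hmemE.1 hx
    obtain ⟨a, b, hab⟩ := hatt2 f hf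
    have haV : a ∈ H.V := hWF.1 f hf a (by rw [hab]; simp)
    have hbV : b ∈ H.V := hWF.1 f hf b (by rw [hab]; simp)
    rcases hcase with rfl | rfl
    · exact ⟨f, a, b, hf, hab, haV, hbV,
        Or.inl ⟨rfl, by rw [att0_oe hf, hab]; rfl, lab0_oe hf⟩⟩
    · exact ⟨f, a, b, hf, hab, haV, hbV,
        Or.inr ⟨rfl, by rw [att0_ie hf, hab]; rfl, lab0_ie hf⟩⟩
  set L := H.V.sort (· ≤ ·) with hL
  have hLl : L.length = H.V.card := Finset.length_sort _
  have hLn : L.Nodup := Finset.sort_nodup _ _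
  have hLm : ∀ {v : ℕ}, v ∈ L ↔ v ∈ H.V := fun {v} => Finset.mem_sort _
  refine ⟨H.V.card, fun v => L.idxOf v, fun e => L.idxOf ((att0 H e).headI),
    ?_, ?_, ?_, ?_, ?_⟩
  · intro v hv
    rw [← hLl]
    exact List.idxOf_lt_length_iff.2 (hLm.2 hv)
  · intro e he
    obtain ⟨f, a, b, hf, hab, haV, hbV, hcase⟩ := hEdgeCase he
    rcases hcase with ⟨rfl, hat, _⟩ | ⟨rfl, hat, _⟩
    · show L.idxOf ((att0 H (oe H f)).headI) < H.V.card
      rw [hat, ← hLl]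
      exact List.idxOf_lt_length_iff.2 (hLm.2 haV)
    · show L.idxOf ((att0 H (ie H f)).headI) < H.V.card
      rw [hat, ← hLl]
      exact List.idxOf_lt_length_iff.2 (hLm.2 hbV)
  · intro e he u hu
    obtain ⟨f, a, b, hf, hab, haV, hbV, hcase⟩ := hEdgeCase he
    rcases hcase with ⟨rfl, hat, _⟩ | ⟨rfl, hat, _⟩
    · replace hu : u ∈ att0 H (oe H f) := hu
      rw [hat] at hu
      rw [List.mem_singleton.1 hu]; exact haV
    · replace hu : u ∈ att0 H (ie H f) := hu
      rw [hat] at hu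
      rw [List.mem_singleton.1 hu]; exact hbV
  · intro e he u hu
    obtain ⟨f, a, b, hf, hab, haV, hbV, hcase⟩ := hEdgeCase he
    rcases hcase with ⟨rfl, hat, _⟩ | ⟨rfl, hat, _⟩
    · replace hu : u ∈ att0 H (oe H f) := hu
      show L.idxOf u = L.idxOf ((att0 H (oe H f)).headI)
      rw [hat] at hu ⊢
      rw [List.mem_singleton.1 hu]
      rfl
    · replace hu : u ∈ att0 H (ie H f) := hu
      show L.idxOf u = L.idxOf ((att0 H (ie H f)).headI)
      rw [hat] at hu ⊢
      rw [List.mem_singleton.1 hu]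
      rfl
  -- the components
  intro i hi
  have hi' : i < L.length := by rw [hLl]; exact hi
  set v := L.get ⟨i, hi'⟩ with hv
  have hvV : v ∈ H.V := hLm.1 (List.get_mem _ _)
  have hvind : L.idxOf v = i := indexOf_nodup_get hLn hi'
  have hind : ∀ u ∈ H.V, (L.idxOf u = i ↔ u = v) := by
    intro u hu
    constructor
    · intro h
      exact (List.idxOf_inj (y := v) (hLm.2 hu)).1 (by rw [h, hvind])
    · rintro rfl; exact hvind
  set EO := H.E.filter (fun f => (H.att f).headI = v) with hEO
  set EI := H.E.filter (fun f => ((H.att f).drop 1).headI = v) with hEI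
  set LO := EO.sort (· ≤ ·) with hLO
  set LI := EI.sort (· ≤ ·) with hLI
  set j := EI.card with hj
  set m := EO.card with hm
  have hLOl : LO.length = m := Finset.length_sort _
  have hLIl : LI.length = j := Finset.length_sort _
  have hLOn : LO.Nodup := Finset.sort_nodup _ _
  have hLIn : LI.Nodup := Finset.sort_nodup _ _
  have hmemLO : ∀ {f : ℕ}, f ∈ LO ↔ f ∈ EO := fun {f} => Finset.mem_sort _
  have hmemLI : ∀ {f : ℕ}, f ∈ LI ↔ f ∈ EI := fun {f} => Finset.mem_sort _
  have hjm : j + m = k := by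
    have hd := hdeg v hvV
    unfold BHypergraph.degree at hd
    calc j + m
        = ∑ f ∈ H.E, ((if ((H.att f).drop 1).headI = v then 1 else 0)
          + (if (H.att f).headI = v then 1 else 0)) := by
          rw [hj, hm, hEI, hEO, Finset.card_filter, Finset.card_filter,
            Finset.sum_add_distrib]
      _ = ∑ f ∈ H.E, (H.att f).count v := by
          refine Finset.sum_congr rfl (fun f hf => ?_)
          obtain ⟨a, b, hab⟩ := hatt2 f hf
          rw [hab]
          show (if b = v then 1 else 0) + (if a = v then 1 else 0) = _
          simp only [List.count_cons, List.count_nil, beq_iff_eq]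
          split_ifs <;> omega
      _ = k := hd
  have hcompV : (Hst H ∅).V.filter (fun u => L.idxOf u = i) = {v} := by
    ext u
    simp only [Finset.mem_filter, Finset.mem_singleton,
      show (Hst H ∅).V = H.V from rfl]
    constructor
    · rintro ⟨hu, hiu⟩; exact (hind u hu).1 hiu
    · rintro rfl; exact ⟨hvV, hvind⟩
  have hcompE : ∀ {x : ℕ},
      x ∈ (Hst H ∅).E.filter (fun e => L.idxOf ((att0 H e).headI) = i) ↔
      (∃ f ∈ EO, oe H f = x) ∨ (∃ f ∈ EI, ie H f = x) := by
    intro x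
    simp only [Finset.mem_filter]
    constructor
    · rintro ⟨hx, hix⟩
      obtain ⟨f, a, b, hf, hab, haV, hbV, hcase⟩ := hEdgeCase hx
      rcases hcase with ⟨rfl, hat, _⟩ | ⟨rfl, hat, _⟩
      · refine Or.inl ⟨f, Finset.mem_filter.2 ⟨hf, ?_⟩, rfl⟩
        rw [hab]
        show a = v
        exact (hind a haV).1 (by rw [hat] at hix; exact hix)
      · refine Or.inr ⟨f, Finset.mem_filter.2 ⟨hf, ?_⟩, rfl⟩
        rw [hab]
        show b = v
        exact (hind b hbV).1 (by rw [hat] at hix; exact hix)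
    · rintro (⟨f, hfO, rfl⟩ | ⟨f, hfI, rfl⟩)
      · have hf := (Finset.mem_filter.1 hfO).1
        have hhead := (Finset.mem_filter.1 hfO).2
        obtain ⟨a, b, hab⟩ := hatt2 f hf
        have ha : a = v := by rw [hab] at hhead; exact hhead
        refine ⟨hmemE.2 ⟨f, hf, Or.inl rfl⟩, ?_⟩
        rw [att0_oe hf, hab]
        show L.idxOf a = i
        rw [ha]; exact hvind
      · have hf := (Finset.mem_filter.1 hfI).1
        have hhead := (Finset.mem_filter.1 hfI).2
        obtain ⟨a, b, hab⟩ := hatt2 f hf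
        have hb : b = v := by rw [hab] at hhead; exact hhead
        refine ⟨hmemE.2 ⟨f, hf, Or.inr rfl⟩, ?_⟩
        rw [att0_ie hf, hab]
        show L.idxOf b = i
        rw [hb]; exact hvind
  set g := fun e => if e % 2 = 0 then j + LO.idxOf (e / 2 - M H)
    else LI.idxOf (e / 2 - M H) with hg
  have hgoe : ∀ f, g (oe H f) = j + LO.idxOf f := by
    intro f
    rw [hg]
    simp only
    rw [if_pos (by simp only [oe]; omega), oe_div]
  have hgie : ∀ f, g (ie H f) = LI.idxOf f := by
    intro f
    rw [hg]
    simp only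
    rw [if_neg (by simp only [ie]; omega), ie_div]
  have hOlt : ∀ f ∈ EO, LO.idxOf f < m := by
    intro f hf
    rw [← hLOl]
    exact List.idxOf_lt_length_iff.2 (hmemLO.2 hf)
  have hIlt : ∀ f ∈ EI, LI.idxOf f < j := by
    intro f hf
    rw [← hLIl]
    exact List.idxOf_lt_length_iff.2 (hmemLI.2 hf)
  refine ⟨Zreg k j, ⟨⟨j, by show j < k + 1; omega⟩, rfl⟩,
    (fun _ => 0), g, ?_, ?_, ?_⟩
  · -- vertex bijection
    have hbij : Set.BijOn (fun _ : ℕ => 0)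
        (((Hst H ∅).V.filter (fun u => L.idxOf u = i) : Finset ℕ) : Set ℕ)
        (((Zreg k j).V : Finset ℕ) : Set ℕ) := by
      rw [hcompV]
      simp only [Finset.coe_singleton, show (Zreg k j).V = {0} from rfl]
      exact Set.bijOn_singleton.2 rfl
    exact hbij
  · -- edge bijection
    refine ⟨?_, ?_, ?_⟩
    · intro x hx
      rcases hcompE.1 (Finset.mem_coe.1 hx) with ⟨f, hfO, rfl⟩ | ⟨f, hfI, rfl⟩
      · have := hOlt f hfO
        show g (oe H f) ∈ ((Zreg k j).E : Set ℕ)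
        rw [hgoe]
        simp only [Zreg, Finset.coe_range, Set.mem_Iio]
        omega
      · have := hIlt f hfI
        show g (ie H f) ∈ ((Zreg k j).E : Set ℕ)
        rw [hgie]
        simp only [Zreg, Finset.coe_range, Set.mem_Iio]
        omega
    · intro x hx y hy hxy
      rcases hcompE.1 (Finset.mem_coe.1 hx) with ⟨f, hfO, rfl⟩ | ⟨f, hfI, rfl⟩ <;>
        rcases hcompE.1 (Finset.mem_coe.1 hy) with ⟨f', hfO', rfl⟩ | ⟨f', hfI', rfl⟩
      · rw [hgoe, hgoe] at hxy
        have : f = f' := (List.idxOf_inj (l := LO) (y := f') (hmemLO.2 hfO)).1 (by omega)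
        rw [this]
      · rw [hgoe, hgie] at hxy
        have := hIlt f' hfI'
        omega
      · rw [hgie, hgoe] at hxy
        have := hIlt f hfI
        omega
      · rw [hgie, hgie] at hxy
        have : f = f' := (List.idxOf_inj (l := LI) (y := f') (hmemLI.2 hfI)).1 hxy
        rw [this]
    · intro y hy
      have hy' : y < k := by
        simpa only [Zreg, Finset.coe_range, Set.mem_Iio] using hy
      by_cases hyj : y < j
      · have hyI : y < LI.length := by rw [hLIl]; exact hyj
        have hfI : LI.get ⟨y, hyI⟩ ∈ EI := hmemLI.1 (List.get_mem _ _)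
        refine ⟨ie H (LI.get ⟨y, hyI⟩), ?_, ?_⟩
        · exact Finset.mem_coe.2 (hcompE.2 (Or.inr ⟨_, hfI, rfl⟩))
        · rw [hgie]
          exact indexOf_nodup_get hLIn hyI
      · have hym : y - j < LO.length := by rw [hLOl]; omega
        have hfO : LO.get ⟨y - j, hym⟩ ∈ EO := hmemLO.1 (List.get_mem _ _)
        refine ⟨oe H (LO.get ⟨y - j, hym⟩), ?_, ?_⟩
        · exact Finset.mem_coe.2 (hcompE.2 (Or.inl ⟨_, hfO, rfl⟩))
        · rw [hgoe, indexOf_nodup_get hLOn hym]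
          omega
  · -- attachments and labels
    intro e he
    rcases hcompE.1 he with ⟨f, hfO, rfl⟩ | ⟨f, hfI, rfl⟩
    · have hf := (Finset.mem_filter.1 hfO).1
      obtain ⟨a, b, hab⟩ := hatt2 f hf
      constructor
      · show [0] = List.map (fun _ => 0) (att0 H (oe H f))
        rw [att0_oe hf, hab]
        rfl
      · show (if g (oe H f) < j then Lab.I else Lab.O) = lab0 H (oe H f)
        rw [hgoe, lab0_oe hf, if_neg (by omega)]
    · have hf := (Finset.mem_filter.1 hfI).1
      obtain ⟨a, b, hab⟩ := hatt2 f hf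
      constructor
      · show [0] = List.map (fun _ => 0) (att0 H (ie H f))
        rw [att0_ie hf, hab]
        rfl
      · show (if g (ie H f) < j then Lab.I else Lab.O) = lab0 H (ie H f)
        rw [hgie, lab0_ie hf, if_pos (hIlt f hfI)]

end BGP

/-- the grammar `BG_reg^(k)` generates exactly the connected
`k`-regular directed graphs (every vertex has in-degree plus out-degree `k`). -/
theorem BGreg_generates_k_regular (k : ℕ) (H : BHypergraph Lab) :
    (H ∈ BondingGrammar.Lang (BGreg k) ∧ H.Connected) ↔
    (H.WellFormed typLab ∧ (∀ e ∈ H.E, H.lab e = Lab.b) ∧ H.Connected ∧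
      ∀ v ∈ H.V, H.degree v = k) := by
  constructor
  · rintro ⟨⟨⟨H₀, hcop, hsteps⟩, hT⟩, hconn⟩
    obtain ⟨hWF₀, hdeg₀⟩ := BGP.union_inv hcop
    obtain ⟨hVeq, hdeq, hWFp⟩ := BGP.rtg_inv hsteps
    refine ⟨hWFp hWF₀, fun e he => ?_, hconn, fun v hv => ?_⟩
    · have h := hT e he
      simpa [BGreg] using h
    · rw [hdeq v]
      exact hdeg₀ v (by rw [← hVeq]; exact hv)
  · rintro ⟨hWF, hlab, hconn, hdeg⟩
    refine ⟨⟨⟨BGP.Hst H ∅, BGP.copies hWF hlab hdeg, ?_⟩, fun e he => ?_⟩, hconn⟩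
    · by_cases hE : H.E = ∅
      · have hatt : BGP.att0 H = H.att := by
          funext f
          rw [BGP.att0, if_neg]
          rintro ⟨_, hmem⟩
          rw [hE] at hmem
          exact absurd hmem (Finset.notMem_empty _)
        have hlb : BGP.lab0 H = H.lab := by
          funext f
          rw [BGP.lab0, if_neg]
          rintro ⟨_, hmem⟩
          rw [hE] at hmem
          exact absurd hmem (Finset.notMem_empty _)
        have hEst : BGP.Est H ∅ = H.E := by simp [BGP.Est, hE]
        have heq : BGP.Hst H ∅ = H := by
          show (⟨H.V, BGP.Est H ∅, BGP.att0 H, BGP.lab0 H⟩ : BHypergraph Lab) = H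
          rw [hEst, hatt, hlb]
        rw [heq]
      · have h := BGP.breaks hlab H.E (subset_refl _) (Finset.nonempty_iff_ne_empty.2 hE)
        rw [Finset.sdiff_self] at h
        exact h
    · rw [hlab e he]
      exact rfl
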